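/- On a W₃-manifold, ‖∇J‖² = -2(τ + τ**), where τ = g^{ij}g^{kl}R(e_i,e_k,e_l,e_j) is the scalar curvature and τ** = g^{ij}g^{kl}R(e_i,e_k,Je_l,Je_j). -/

import Mathlib

set_option linter.unusedSectionVars false
set_option maxHeartbeats 1000000


/- Algebraic model of an almost complex manifold with Norden metric:
`A` is the ring of smooth functions, `V` the `A`-module of vector fields,
`g` the (Norden) metric, `J` the almost complex structure, `nabla` the
Levi-Civita connection, `act X f` the derivative of the function `f` in the
direction of the vector field `X`, and `lb` the Lie bracket of vector fields. -/

variable {A V : Type*} [CommRing A] [Algebra ℝ A] [AddCommGroup V] [Module A V]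

/-- `(∇_X J) Y`. -/
def covJ (nabla : V → V → V) (J : V → V) (X Y : V) : V :=
  nabla X (J Y) - J (nabla X Y)

/-- The fundamental tensor `F(X,Y,Z) = g((∇_X J)Y, Z)`. -/
def Ften (g : V → V → A) (nabla : V → V → V) (J : V → V) (X Y Z : V) : A :=
  g (covJ nabla J X Y) Z

/-- The curvature `R(X,Y)Z = ∇_X ∇_Y Z - ∇_Y ∇_X Z - ∇_{[X,Y]} Z`. -/
def curv (nabla : V → V → V) (lb : V → V → V) (X Y Z : V) : V :=
  nabla X (nabla Y Z) - nabla Y (nabla X Z) - nabla (lb X Y) Z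

/-- The `(0,4)` curvature tensor `R(X,Y,Z,U) = g(R(X,Y)Z, U)`. -/
def curv4 (g : V → V → A) (nabla lb : V → V → V) (X Y Z U : V) : A :=
  g (curv nabla lb X Y Z) U

/-- The covariant derivative `(∇_X F)(Y,Z,U)` of the `(0,3)`-tensor `F`. -/
def covF (g : V → V → A) (nabla : V → V → V) (J : V → V) (act : V → A → A)
    (X Y Z U : V) : A :=
  act X (Ften g nabla J Y Z U) - Ften g nabla J (nabla X Y) Z U
    - Ften g nabla J Y (nabla X Z) U - Ften g nabla J Y Z (nabla X U)

namespace NW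

structure Core (g : V → V → A) (J : V → V) (nabla : V → V → V)
    (act : V → A → A) (lb : V → V → V) : Prop where
  g_symm : ∀ x y, g x y = g y x
  g_addl : ∀ x y z, g (x + y) z = g x z + g y z
  g_smull : ∀ (a : A) (x y : V), g (a • x) y = a * g x y
  J_add : ∀ x y, J (x + y) = J x + J y
  J_smul : ∀ (a : A) (x : V), J (a • x) = a • J x
  J_sq : ∀ x, J (J x) = -x
  norden : ∀ x y, g (J x) (J y) = -(g x y)
  act_add : ∀ X (a b : A), act X (a + b) = act X a + act X b
  act_mul : ∀ X (a b : A), act X (a * b) = act X a * b + a * act X b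
  nabla_addl : ∀ X Y Z, nabla (X + Y) Z = nabla X Z + nabla Y Z
  nabla_smull : ∀ (a : A) (X Y : V), nabla (a • X) Y = a • nabla X Y
  nabla_addr : ∀ X Y Z, nabla X (Y + Z) = nabla X Y + nabla X Z
  nabla_leib : ∀ X (a : A) (Y : V), nabla X (a • Y) = act X a • Y + a • nabla X Y
  compat : ∀ X Y Z, act X (g Y Z) = g (nabla X Y) Z + g Y (nabla X Z)
  torsion_free : ∀ X Y, nabla X Y - nabla Y X = lb X Y
  act_lb : ∀ X Y (a : A), act (lb X Y) a = act X (act Y a) - act Y (act X a)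

variable {g : V → V → A} {J : V → V} {nabla : V → V → V} {act : V → A → A} {lb : V → V → V}

lemma half {a : A} (h : a + a = 0) : a = 0 := by
  have h2 : (2:ℝ) • a = 0 := by rw [two_smul]; exact h
  calc a = ((2:ℝ)⁻¹ * (2:ℝ)) • a := by norm_num
    _ = (2:ℝ)⁻¹ • ((2:ℝ) • a) := by rw [mul_smul]
    _ = 0 := by rw [h2, smul_zero]

section CoreLemmas
variable (hc : Core g J nabla act lb)
include hc

lemma g_addr : ∀ x y z : V, g x (y + z) = g x y + g x z := by
  intro x y z; rw [hc.g_symm, hc.g_addl, hc.g_symm y, hc.g_symm z]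

lemma g_smulr : ∀ (a : A) (x y : V), g x (a • y) = a * g x y := by
  intro a x y; rw [hc.g_symm, hc.g_smull, hc.g_symm]

lemma g_zerol : ∀ x : V, g 0 x = 0 := by
  intro x
  have := hc.g_smull 0 0 x; rw [zero_smul, zero_mul] at this; exact this

lemma g_negl : ∀ x y : V, g (-x) y = -(g x y) := by
  intro x y
  have := hc.g_smull (-1) x y; rw [neg_one_smul, neg_one_mul] at this; exact this

lemma g_subl : ∀ x y z : V, g (x - y) z = g x z - g y z := by
  intro x y z
  rw [sub_eq_add_neg, hc.g_addl, g_negl hc, sub_eq_add_neg]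

lemma g_negr : ∀ x y : V, g x (-y) = -(g x y) := by
  intro x y; rw [hc.g_symm, g_negl hc, hc.g_symm]

lemma g_subr : ∀ x y z : V, g x (y - z) = g x y - g x z := by
  intro x y z; rw [hc.g_symm, g_subl hc, hc.g_symm y, hc.g_symm z]

lemma act_zero : ∀ X, act X 0 = 0 := by
  intro X
  have := hc.act_add X 0 0; rw [add_zero] at this
  linear_combination -this

lemma act_neg : ∀ X (a : A), act X (-a) = -(act X a) := by
  intro X a
  have := hc.act_add X a (-a); rw [add_neg_cancel, act_zero hc] at this
  linear_combination -this

lemma act_sub : ∀ X (a b : A), act X (a - b) = act X a - act X b := by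
  intro X a b; rw [sub_eq_add_neg, hc.act_add, act_neg hc, sub_eq_add_neg]

lemma act_one : ∀ X, act X (1:A) = 0 := by
  intro X
  have := hc.act_mul X 1 1; rw [mul_one, one_mul] at this
  linear_combination -this

lemma J_zero : J (0:V) = 0 := by
  have := hc.J_smul 0 0; rw [zero_smul, zero_smul] at this; exact this

lemma J_neg : ∀ x : V, J (-x) = -(J x) := by
  intro x
  have := hc.J_smul (-1) x; rw [neg_one_smul, neg_one_smul] at this; exact this

lemma J_sub : ∀ x y : V, J (x - y) = J x - J y := by
  intro x y; rw [sub_eq_add_neg, hc.J_add, J_neg hc, sub_eq_add_neg]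

lemma nabla_zerol : ∀ Y : V, nabla 0 Y = 0 := by
  intro Y
  have := hc.nabla_smull 0 0 Y; rw [zero_smul, zero_smul] at this; exact this

lemma nabla_negl : ∀ X Y : V, nabla (-X) Y = -(nabla X Y) := by
  intro X Y
  have := hc.nabla_smull (-1) X Y; rw [neg_one_smul, neg_one_smul] at this; exact this

lemma nabla_subl : ∀ X X' Y : V, nabla (X - X') Y = nabla X Y - nabla X' Y := by
  intro X X' Y; rw [sub_eq_add_neg, hc.nabla_addl, nabla_negl hc, sub_eq_add_neg]

lemma nabla_negr : ∀ X Y : V, nabla X (-Y) = -(nabla X Y) := by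
  intro X Y
  have := hc.nabla_leib X (-1) Y
  rw [neg_one_smul, act_neg hc, act_one hc, neg_zero, zero_smul, neg_one_smul, zero_add] at this
  exact this

lemma nabla_subr : ∀ X Y Z : V, nabla X (Y - Z) = nabla X Y - nabla X Z := by
  intro X Y Z; rw [sub_eq_add_neg, hc.nabla_addr, nabla_negr hc, sub_eq_add_neg]

lemma gJ : ∀ x y : V, g (J x) y = g x (J y) := by
  intro x y
  have h1 := hc.norden x (J y)
  rw [hc.J_sq, g_negr hc] at h1
  exact neg_injective h1


-- covJ lemmas
lemma covJ_addl : ∀ X X' Y, covJ nabla J (X + X') Y = covJ nabla J X Y + covJ nabla J X' Y := by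
  intro X X' Y; unfold covJ; rw [hc.nabla_addl, hc.nabla_addl, hc.J_add]; abel

lemma covJ_smull : ∀ (a : A) X Y, covJ nabla J (a • X) Y = a • covJ nabla J X Y := by
  intro a X Y; unfold covJ; rw [hc.nabla_smull, hc.nabla_smull, hc.J_smul, smul_sub]

lemma covJ_addr : ∀ X Y Y', covJ nabla J X (Y + Y') = covJ nabla J X Y + covJ nabla J X Y' := by
  intro X Y Y'; unfold covJ; rw [hc.J_add, hc.nabla_addr, hc.nabla_addr, hc.J_add]; abel

lemma covJ_smulr : ∀ (a : A) X Y, covJ nabla J X (a • Y) = a • covJ nabla J X Y := by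
  intro a X Y; unfold covJ
  rw [hc.J_smul, hc.nabla_leib, hc.nabla_leib, hc.J_add, hc.J_smul, hc.J_smul, smul_sub]
  abel

lemma covJ_J : ∀ X Y, covJ nabla J X (J Y) = -(J (covJ nabla J X Y)) := by
  intro X Y; unfold covJ
  rw [hc.J_sq, nabla_negr hc, J_sub hc, hc.J_sq]
  abel

lemma selfadj : ∀ X Y Z, g (covJ nabla J X Y) Z = g Y (covJ nabla J X Z) := by
  intro X Y Z
  have h1 := hc.compat X (J Y) Z
  have h2 := hc.compat X Y (J Z)
  have hg : g (J Y) Z = g Y (J Z) := gJ hc Y Z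
  rw [hg] at h1
  unfold covJ
  rw [g_subl hc, g_subr hc, gJ hc (nabla X Y) Z]
  have hg2 : g Y (J (nabla X Z)) = g (J Y) (nabla X Z) := (gJ hc Y (nabla X Z)).symm
  rw [hg2]
  linear_combination h2 - h1

-- Ften lemmas
lemma F_sym : ∀ X Y Z, Ften g nabla J X Y Z = Ften g nabla J X Z Y := by
  intro X Y Z; unfold Ften
  rw [selfadj hc, hc.g_symm]

lemma F_J : ∀ X Y Z, Ften g nabla J X (J Y) Z = -(Ften g nabla J X Y (J Z)) := by
  intro X Y Z; unfold Ften
  rw [covJ_J hc, g_negl hc, gJ hc]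

lemma F_addl : ∀ X X' Y Z, Ften g nabla J (X + X') Y Z
    = Ften g nabla J X Y Z + Ften g nabla J X' Y Z := by
  intro X X' Y Z; unfold Ften; rw [covJ_addl hc, hc.g_addl]

lemma F_smull : ∀ (a : A) X Y Z, Ften g nabla J (a • X) Y Z = a * Ften g nabla J X Y Z := by
  intro a X Y Z; unfold Ften; rw [covJ_smull hc, hc.g_smull]

lemma F_addm : ∀ X Y Y' Z, Ften g nabla J X (Y + Y') Z
    = Ften g nabla J X Y Z + Ften g nabla J X Y' Z := by
  intro X Y Y' Z; unfold Ften; rw [covJ_addr hc, hc.g_addl]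

lemma F_smulm : ∀ (a : A) X Y Z, Ften g nabla J X (a • Y) Z = a * Ften g nabla J X Y Z := by
  intro a X Y Z; unfold Ften; rw [covJ_smulr hc, hc.g_smull]

lemma F_subm : ∀ X Y Y' Z, Ften g nabla J X (Y - Y') Z
    = Ften g nabla J X Y Z - Ften g nabla J X Y' Z := by
  intro X Y Y' Z; unfold Ften; rw [sub_eq_add_neg, covJ_addr hc, hc.g_addl]
  have : covJ nabla J X (-Y') = -(covJ nabla J X Y') := by
    have := covJ_smulr hc (-1) X Y'; rw [neg_one_smul, neg_one_smul] at this; exact this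
  rw [this, g_negl hc, sub_eq_add_neg]

lemma F_addr : ∀ X Y Z Z', Ften g nabla J X Y (Z + Z')
    = Ften g nabla J X Y Z + Ften g nabla J X Y Z' := by
  intro X Y Z Z'; unfold Ften; rw [g_addr hc]

lemma F_smulr : ∀ (a : A) X Y Z, Ften g nabla J X Y (a • Z) = a * Ften g nabla J X Y Z := by
  intro a X Y Z; unfold Ften; rw [g_smulr hc]

lemma F_subr : ∀ X Y Z Z', Ften g nabla J X Y (Z - Z')
    = Ften g nabla J X Y Z - Ften g nabla J X Y Z' := by
  intro X Y Z Z'; unfold Ften; rw [g_subr hc]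

-- Lie bracket lemmas
lemma lb_eq : ∀ X Y, lb X Y = nabla X Y - nabla Y X := fun X Y => (hc.torsion_free X Y).symm

lemma lb_anti : ∀ X Y, lb Y X = -(lb X Y) := by
  intro X Y; rw [lb_eq hc, lb_eq hc]; abel

lemma lb_addl : ∀ X X' Y, lb (X + X') Y = lb X Y + lb X' Y := by
  intro X X' Y; rw [lb_eq hc, lb_eq hc, lb_eq hc, hc.nabla_addl, hc.nabla_addr]; abel

lemma lb_smull : ∀ (a : A) X Y, lb (a • X) Y = a • lb X Y - act Y a • X := by
  intro a X Y
  rw [lb_eq hc, lb_eq hc, hc.nabla_smull, hc.nabla_leib, smul_sub]; abel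

-- curvature lemmas
lemma curv_anti : ∀ X Y Z, curv nabla lb X Y Z = -(curv nabla lb Y X Z) := by
  intro X Y Z; unfold curv
  rw [lb_anti hc X Y]
  · rw [nabla_negl hc]; abel

lemma curv_addl : ∀ X X' Y Z, curv nabla lb (X + X') Y Z
    = curv nabla lb X Y Z + curv nabla lb X' Y Z := by
  intro X X' Y Z; unfold curv
  rw [hc.nabla_addl X X' (nabla Y Z), hc.nabla_addl X X' Z, hc.nabla_addr Y,
    lb_addl hc, hc.nabla_addl]
  abel

lemma curv_smull : ∀ (a : A) X Y Z, curv nabla lb (a • X) Y Z = a • curv nabla lb X Y Z := by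
  intro a X Y Z; unfold curv
  rw [hc.nabla_smull a X (nabla Y Z), hc.nabla_smull a X Z, hc.nabla_leib Y a (nabla X Z),
    lb_smull hc a X Y, nabla_subl hc (a • lb X Y) (act Y a • X) Z,
    hc.nabla_smull a (lb X Y) Z, hc.nabla_smull (act Y a) X Z, smul_sub, smul_sub]
  abel

lemma curv_addm : ∀ X Y Y' Z, curv nabla lb X (Y + Y') Z
    = curv nabla lb X Y Z + curv nabla lb X Y' Z := by
  intro X Y Y' Z
  rw [curv_anti hc, curv_addl hc, curv_anti hc Y, curv_anti hc Y']; abel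

lemma curv_smulm : ∀ (a : A) X Y Z, curv nabla lb X (a • Y) Z = a • curv nabla lb X Y Z := by
  intro a X Y Z
  rw [curv_anti hc, curv_smull hc, curv_anti hc Y, smul_neg]; abel

lemma curv_addr : ∀ X Y Z Z', curv nabla lb X Y (Z + Z')
    = curv nabla lb X Y Z + curv nabla lb X Y Z' := by
  intro X Y Z Z'; unfold curv
  rw [hc.nabla_addr, hc.nabla_addr, hc.nabla_addr, hc.nabla_addr, hc.nabla_addr]; abel

lemma curv_smulr : ∀ (a : A) X Y Z, curv nabla lb X Y (a • Z) = a • curv nabla lb X Y Z := by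
  intro a X Y Z; unfold curv
  rw [hc.nabla_leib Y, hc.nabla_addr, hc.nabla_leib X (act Y a), hc.nabla_leib X a,
    hc.nabla_leib X, hc.nabla_addr, hc.nabla_leib Y (act X a), hc.nabla_leib Y a,
    hc.nabla_leib (lb X Y), hc.act_lb, sub_smul, smul_sub, smul_sub]
  abel

-- curv4 lemmas
lemma curv4_anti12 : ∀ X Y Z U, curv4 g nabla lb X Y Z U = -(curv4 g nabla lb Y X Z U) := by
  intro X Y Z U; unfold curv4; rw [curv_anti hc, g_negl hc]

lemma curv4_anti34 : ∀ X Y Z U, curv4 g nabla lb X Y Z U = -(curv4 g nabla lb X Y U Z) := by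
  intro X Y Z U
  have h := hc.act_lb X Y (g Z U)
  rw [hc.compat Y Z U, hc.act_add, hc.compat X (nabla Y Z) U, hc.compat X Z (nabla Y U),
    hc.compat X Z U, hc.act_add, hc.compat Y (nabla X Z) U, hc.compat Y Z (nabla X U),
    hc.compat (lb X Y) Z U] at h
  unfold curv4 curv
  rw [g_subl hc, g_subl hc, g_subl hc, g_subl hc]
  have s1 : g Z (nabla X (nabla Y U)) = g (nabla X (nabla Y U)) Z := hc.g_symm _ _
  have s2 : g Z (nabla Y (nabla X U)) = g (nabla Y (nabla X U)) Z := hc.g_symm _ _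
  have s3 : g Z (nabla (lb X Y) U) = g (nabla (lb X Y) U) Z := hc.g_symm _ _
  linear_combination -h - s1 + s2 + s3

lemma curv4_addl : ∀ X X' Y Z U, curv4 g nabla lb (X + X') Y Z U
    = curv4 g nabla lb X Y Z U + curv4 g nabla lb X' Y Z U := by
  intro X X' Y Z U; unfold curv4; rw [curv_addl hc, hc.g_addl]

lemma curv4_smull : ∀ (a : A) X Y Z U, curv4 g nabla lb (a • X) Y Z U
    = a * curv4 g nabla lb X Y Z U := by
  intro a X Y Z U; unfold curv4; rw [curv_smull hc, hc.g_smull]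

lemma curv4_addm : ∀ X Y Y' Z U, curv4 g nabla lb X (Y + Y') Z U
    = curv4 g nabla lb X Y Z U + curv4 g nabla lb X Y' Z U := by
  intro X Y Y' Z U; unfold curv4; rw [curv_addm hc, hc.g_addl]

lemma curv4_smulm : ∀ (a : A) X Y Z U, curv4 g nabla lb X (a • Y) Z U
    = a * curv4 g nabla lb X Y Z U := by
  intro a X Y Z U; unfold curv4; rw [curv_smulm hc, hc.g_smull]

lemma curv4_add3 : ∀ X Y Z Z' U, curv4 g nabla lb X Y (Z + Z') U
    = curv4 g nabla lb X Y Z U + curv4 g nabla lb X Y Z' U := by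
  intro X Y Z Z' U; unfold curv4; rw [curv_addr hc, hc.g_addl]

lemma curv4_smul3 : ∀ (a : A) X Y Z U, curv4 g nabla lb X Y (a • Z) U
    = a * curv4 g nabla lb X Y Z U := by
  intro a X Y Z U; unfold curv4; rw [curv_smulr hc, hc.g_smull]

lemma curv4_add4 : ∀ X Y Z U U', curv4 g nabla lb X Y Z (U + U')
    = curv4 g nabla lb X Y Z U + curv4 g nabla lb X Y Z U' := by
  intro X Y Z U U'; unfold curv4; rw [g_addr hc]

lemma curv4_smul4 : ∀ (a : A) X Y Z U, curv4 g nabla lb X Y Z (a • U)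
    = a * curv4 g nabla lb X Y Z U := by
  intro a X Y Z U; unfold curv4; rw [g_smulr hc]

lemma curv4_neg4 : ∀ X Y Z U, curv4 g nabla lb X Y Z (-U) = -(curv4 g nabla lb X Y Z U) := by
  intro X Y Z U; unfold curv4; rw [g_negr hc]

-- covF lemmas
lemma covF_sym34 : ∀ X Y Z U, covF g nabla J act X Y Z U = covF g nabla J act X Y U Z := by
  intro X Y Z U; unfold covF
  rw [F_sym hc Y Z U, F_sym hc (nabla X Y) Z U, F_sym hc Y (nabla X Z) U,
    F_sym hc Y Z (nabla X U)]
  ring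

lemma covF_addm : ∀ X Y Y' Z U, covF g nabla J act X (Y + Y') Z U
    = covF g nabla J act X Y Z U + covF g nabla J act X Y' Z U := by
  intro X Y Y' Z U; unfold covF
  rw [F_addl hc, hc.act_add, hc.nabla_addr, F_addl hc, F_addl hc, F_addl hc]
  ring

lemma covF_smulm : ∀ (a : A) X Y Z U, covF g nabla J act X (a • Y) Z U
    = a * covF g nabla J act X Y Z U := by
  intro a X Y Z U; unfold covF
  rw [F_smull hc, hc.act_mul, hc.nabla_leib, F_addl hc, F_smull hc, F_smull hc,
    F_smull hc, F_smull hc]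
  ring

lemma covF_add3 : ∀ X Y Z Z' U, covF g nabla J act X Y (Z + Z') U
    = covF g nabla J act X Y Z U + covF g nabla J act X Y Z' U := by
  intro X Y Z Z' U; unfold covF
  rw [F_addm hc, hc.act_add, hc.nabla_addr, F_addm hc, F_addm hc, F_addm hc]
  ring

lemma covF_smul3 : ∀ (a : A) X Y Z U, covF g nabla J act X Y (a • Z) U
    = a * covF g nabla J act X Y Z U := by
  intro a X Y Z U; unfold covF
  rw [F_smulm hc, hc.act_mul, hc.nabla_leib, F_addm hc, F_smulm hc, F_smulm hc,
    F_smulm hc, F_smulm hc]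
  ring

lemma covF_add4 : ∀ X Y Z U U', covF g nabla J act X Y Z (U + U')
    = covF g nabla J act X Y Z U + covF g nabla J act X Y Z U' := by
  intro X Y Z U U'; unfold covF
  rw [F_addr hc, hc.act_add, hc.nabla_addr, F_addr hc, F_addr hc, F_addr hc]
  ring

lemma covF_smul4 : ∀ (a : A) X Y Z U, covF g nabla J act X Y Z (a • U)
    = a * covF g nabla J act X Y Z U := by
  intro a X Y Z U; unfold covF
  rw [F_smulr hc, hc.act_mul, hc.nabla_leib, F_addr hc, F_smulr hc, F_smulr hc,
    F_smulr hc, F_smulr hc]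
  ring

/-- The Ricci-type identity (★). -/
lemma star : ∀ X Y Z U, covF g nabla J act X Y Z U - covF g nabla J act Y X Z U
    = curv4 g nabla lb X Y (J Z) U - curv4 g nabla lb X Y Z (J U) := by
  intro X Y Z U
  have expand : ∀ X Y : V, covF g nabla J act X Y Z U
      = g (nabla X (nabla Y (J Z))) U - g (nabla X (J (nabla Y Z))) U
        - (g (nabla (nabla X Y) (J Z)) U - g (nabla (nabla X Y) Z) (J U))
        - (g (nabla Y (J (nabla X Z))) U - g (nabla Y (nabla X Z)) (J U)) := by
    intro X Y
    unfold covF Ften covJ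
    rw [g_subl hc (nabla Y (J Z)) (J (nabla Y Z)) U, act_sub hc,
      hc.compat X (nabla Y (J Z)) U, hc.compat X (J (nabla Y Z)) U,
      g_subl hc (nabla (nabla X Y) (J Z)) (J (nabla (nabla X Y) Z)) U,
      g_subl hc (nabla Y (J (nabla X Z))) (J (nabla Y (nabla X Z))) U,
      g_subl hc (nabla Y (J Z)) (J (nabla Y Z)) (nabla X U),
      gJ hc (nabla (nabla X Y) Z) U, gJ hc (nabla Y (nabla X Z)) U]
    ring
  rw [expand X Y, expand Y X]
  unfold curv4 curv
  rw [← hc.torsion_free X Y, nabla_subl hc (nabla X Y) (nabla Y X) (J Z),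
    nabla_subl hc (nabla X Y) (nabla Y X) Z]
  rw [g_subl hc, g_subl hc, g_subl hc, g_subl hc, g_subl hc, g_subl hc]
  ring

/-- The J-move identity (‡). -/
lemma ddag : ∀ X Y Z U, covF g nabla J act X Y (J Z) U + covF g nabla J act X Y Z (J U)
    = -(g (covJ nabla J X Z) (covJ nabla J Y U)) - g (covJ nabla J Y Z) (covJ nabla J X U) := by
  intro X Y Z U
  unfold covF
  have hact : act X (Ften g nabla J Y (J Z) U) + act X (Ften g nabla J Y Z (J U)) = 0 := by
    rw [← hc.act_add]
    rw [F_J hc Y Z U]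
    rw [neg_add_cancel, act_zero hc]
  have h1 : Ften g nabla J (nabla X Y) (J Z) U + Ften g nabla J (nabla X Y) Z (J U) = 0 := by
    rw [F_J hc (nabla X Y) Z U]; ring
  have h2 : Ften g nabla J Y (nabla X (J Z)) U + Ften g nabla J Y (nabla X Z) (J U)
      = g (covJ nabla J X Z) (covJ nabla J Y U) := by
    have hz : Ften g nabla J Y (nabla X Z) (J U) = -(Ften g nabla J Y (J (nabla X Z)) U) := by
      rw [F_J hc Y (nabla X Z) U]; ring
    rw [hz, ← sub_eq_add_neg, ← F_subm hc]
    have : nabla X (J Z) - J (nabla X Z) = covJ nabla J X Z := rfl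
    rw [this]
    unfold Ften
    rw [selfadj hc]
  have h3 : Ften g nabla J Y (J Z) (nabla X U) + Ften g nabla J Y Z (nabla X (J U))
      = g (covJ nabla J Y Z) (covJ nabla J X U) := by
    have hz : Ften g nabla J Y (J Z) (nabla X U) = -(Ften g nabla J Y Z (J (nabla X U))) :=
      F_J hc Y Z (nabla X U)
    rw [hz, neg_add_eq_sub, ← F_subr hc]
    have : nabla X (J U) - J (nabla X U) = covJ nabla J X U := rfl
    rw [this]
    rfl
  linear_combination hact - h1 - h2 - h3

/-- The cyclic identity (†), consequence of the W₃ condition. -/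
lemma cyc (W3 : ∀ X Y Z, Ften g nabla J X Y Z + Ften g nabla J Y Z X + Ften g nabla J Z X Y = 0) :
    ∀ W X Y Z, covF g nabla J act W X Y Z + covF g nabla J act W Y Z X
      + covF g nabla J act W Z X Y = 0 := by
  intro W X Y Z
  unfold covF
  have hact : act W (Ften g nabla J X Y Z) + act W (Ften g nabla J Y Z X)
      + act W (Ften g nabla J Z X Y) = 0 := by
    rw [← hc.act_add, ← hc.act_add, W3 X Y Z, act_zero hc]
  linear_combination hact - W3 (nabla W X) Y Z - W3 (nabla W Y) Z X - W3 (nabla W Z) X Y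


end CoreLemmas

section Basis
variable {m : ℕ} {e : Fin m → V} {ginv : Fin m → Fin m → A}

/-- A linear functional applied to a finite combination. -/
lemma lin_sum (φ : V → A) (hadd : ∀ x y, φ (x + y) = φ x + φ y)
    (hsmul : ∀ (c : A) (x : V), φ (c • x) = c * φ x) (c : Fin m → A) (w : Fin m → V) :
    φ (∑ i, c i • w i) = ∑ i, c i * φ (w i) := by
  classical
  have h0 : φ 0 = 0 := by have := hsmul 0 0; simpa using this
  have key : ∀ s : Finset (Fin m), φ (∑ i ∈ s, c i • w i) = ∑ i ∈ s, c i * φ (w i) := by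
    intro s
    induction s using Finset.cons_induction with
    | empty => simpa using h0
    | cons a s ha ih => rw [Finset.sum_cons, hadd, hsmul, ih, Finset.sum_cons]
  exact key Finset.univ

lemma gram_right
    (hginv : ∀ i j, (∑ k, ginv i k * g (e k) (e j)) = if i = j then (1:A) else 0) :
    ∀ p b, (∑ a, g (e p) (e a) * ginv a b) = if p = b then (1:A) else 0 := by
  classical
  set G : Matrix (Fin m) (Fin m) A := Matrix.of fun i j => g (e i) (e j) with hG
  set Gi : Matrix (Fin m) (Fin m) A := Matrix.of ginv with hGi
  have h1 : Gi * G = 1 := by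
    ext i j
    simp only [Matrix.mul_apply, hG, hGi, Matrix.of_apply, Matrix.one_apply]
    exact hginv i j
  have h2 : G * Gi = 1 := mul_eq_one_comm.mp h1
  intro p b
  have h3 := congrFun (congrFun h2 p) b
  simpa only [Matrix.mul_apply, hG, hGi, Matrix.of_apply, Matrix.one_apply] using h3

lemma ginv_symm (hgs : ∀ x y : V, g x y = g y x)
    (hginv : ∀ i j, (∑ k, ginv i k * g (e k) (e j)) = if i = j then (1:A) else 0) :
    ∀ i j, ginv i j = ginv j i := by
  classical
  set G : Matrix (Fin m) (Fin m) A := Matrix.of fun i j => g (e i) (e j) with hG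
  set Gi : Matrix (Fin m) (Fin m) A := Matrix.of ginv with hGi
  have h1 : Gi * G = 1 := by
    ext i j
    simp only [Matrix.mul_apply, hG, hGi, Matrix.of_apply, Matrix.one_apply]
    exact hginv i j
  have h2 : G * Gi = 1 := mul_eq_one_comm.mp h1
  have hGt : G.transpose = G := by
    ext i j
    simp only [Matrix.transpose_apply, hG, Matrix.of_apply]
    exact hgs (e j) (e i)
  have h3 : Gi.transpose * G = 1 := by
    calc Gi.transpose * G = Gi.transpose * G.transpose := by rw [hGt]
      _ = (G * Gi).transpose := (Matrix.transpose_mul G Gi).symm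
      _ = 1 := by rw [h2, Matrix.transpose_one]
  have h4 : Gi.transpose = Gi := by
    calc Gi.transpose = Gi.transpose * 1 := by rw [mul_one]
      _ = Gi.transpose * (G * Gi) := by rw [h2]
      _ = (Gi.transpose * G) * Gi := by rw [mul_assoc]
      _ = Gi := by rw [h3, one_mul]
  intro i j
  have := congrFun (congrFun h4 j) i
  simpa only [Matrix.transpose_apply, hGi, Matrix.of_apply] using this

lemma expand_linear (hc : Core g J nabla act lb)
    (hsp : ∀ v : V, ∃ c : Fin m → A, v = ∑ i, c i • e i)
    (hginv : ∀ i j, (∑ k, ginv i k * g (e k) (e j)) = if i = j then (1:A) else 0)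
    (φ : V → A) (hadd : ∀ x y, φ (x + y) = φ x + φ y)
    (hsmul : ∀ (c : A) (x : V), φ (c • x) = c * φ x) (v : V) :
    φ v = ∑ p, ∑ q, ginv p q * (g v (e p) * φ (e q)) := by
  classical
  have hgr := gram_right (e := e) (ginv := ginv) hginv
  obtain ⟨c, hcv⟩ := hsp v
  have hφ0 : φ v = ∑ t, c t * φ (e t) := by rw [hcv]; exact lin_sum φ hadd hsmul c e
  have hgv : ∀ p, g v (e p) = ∑ t, c t * g (e t) (e p) := by
    intro p; rw [hcv]
    exact lin_sum (fun x => g x (e p)) (fun x y => hc.g_addl x y (e p))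
      (fun a x => hc.g_smull a x (e p)) c e
  symm
  calc ∑ p, ∑ q, ginv p q * (g v (e p) * φ (e q))
      = ∑ q, ∑ p, (g v (e p) * ginv p q) * φ (e q) := by
        rw [Finset.sum_comm]
        exact Finset.sum_congr rfl fun q _ => Finset.sum_congr rfl fun p _ => by ring
    _ = ∑ q, (∑ p, g v (e p) * ginv p q) * φ (e q) := by
        exact Finset.sum_congr rfl fun q _ => by rw [Finset.sum_mul]
    _ = ∑ q, c q * φ (e q) := by
        refine Finset.sum_congr rfl fun q _ => ?_
        congr 1
        calc ∑ p, g v (e p) * ginv p q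
            = ∑ p, ∑ t, c t * g (e t) (e p) * ginv p q := by
              refine Finset.sum_congr rfl fun p _ => ?_
              rw [hgv p, Finset.sum_mul]
          _ = ∑ t, ∑ p, c t * (g (e t) (e p) * ginv p q) := by
              rw [Finset.sum_comm]
              exact Finset.sum_congr rfl fun t _ =>
                Finset.sum_congr rfl fun p _ => by ring
          _ = ∑ t, c t * (∑ p, g (e t) (e p) * ginv p q) := by
              exact Finset.sum_congr rfl fun t _ => by rw [Finset.mul_sum]
          _ = ∑ t, c t * (if t = q then 1 else 0) := by
              exact Finset.sum_congr rfl fun t _ => by rw [hgr t q]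
          _ = c q := by simp
    _ = φ v := hφ0.symm

/-- Quadruple contraction. -/
def CS {m : ℕ} (ginv : Fin m → Fin m → A) (f : Fin m → Fin m → Fin m → Fin m → A) : A :=
  ∑ i, ∑ j, ∑ k, ∑ l, ginv i j * ginv k l * f i j k l

/-- Sextuple contraction. -/
def SS {m : ℕ} (ginv : Fin m → Fin m → A)
    (f : Fin m → Fin m → Fin m → Fin m → Fin m → Fin m → A) : A :=
  ∑ i, ∑ j, ∑ k, ∑ l, ∑ p, ∑ q, ginv i j * ginv k l * ginv p q * f i j k l p q

section SumTools
variable {m : ℕ} {e : Fin m → V} {ginv : Fin m → Fin m → A}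

lemma sum4_flat {M : Type*} [AddCommMonoid M] (F : Fin m → Fin m → Fin m → Fin m → M) :
    (∑ i, ∑ j, ∑ k, ∑ l, F i j k l)
      = ∑ x : Fin m × Fin m × Fin m × Fin m, F x.1 x.2.1 x.2.2.1 x.2.2.2 := by
  simp only [Fintype.sum_prod_type]

lemma sum6_flat {M : Type*} [AddCommMonoid M]
    (F : Fin m → Fin m → Fin m → Fin m → Fin m → Fin m → M) :
    (∑ i, ∑ j, ∑ k, ∑ l, ∑ p, ∑ q, F i j k l p q)
      = ∑ x : Fin m × Fin m × Fin m × Fin m × Fin m × Fin m,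
          F x.1 x.2.1 x.2.2.1 x.2.2.2.1 x.2.2.2.2.1 x.2.2.2.2.2 := by
  simp only [Fintype.sum_prod_type]

lemma sum_perm {α : Type*} [Fintype α] {M : Type*} [AddCommMonoid M] (σ : α ≃ α) (F : α → M) :
    ∑ x, F x = ∑ x, F (σ x) :=
  (Fintype.sum_equiv σ (fun x => F (σ x)) F (fun _ => rfl)).symm

variable (hgs : ∀ i j, ginv i j = ginv j i)

lemma CS_congr {f h : Fin m → Fin m → Fin m → Fin m → A}
    (hfh : ∀ i j k l, f i j k l = h i j k l) : CS ginv f = CS ginv h := by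
  unfold CS; simp only [hfh]

lemma CS_add (f h : Fin m → Fin m → Fin m → Fin m → A) :
    CS ginv (fun i j k l => f i j k l + h i j k l) = CS ginv f + CS ginv h := by
  unfold CS; simp only [mul_add, Finset.sum_add_distrib]

lemma CS_neg (f : Fin m → Fin m → Fin m → Fin m → A) :
    CS ginv (fun i j k l => -(f i j k l)) = -(CS ginv f) := by
  unfold CS; simp only [mul_neg, Finset.sum_neg_distrib]

lemma CS_sub (f h : Fin m → Fin m → Fin m → Fin m → A) :
    CS ginv (fun i j k l => f i j k l - h i j k l) = CS ginv f - CS ginv h := by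
  unfold CS; simp only [mul_sub, Finset.sum_sub_distrib]

lemma CS_zero : CS (m := m) ginv (fun _ _ _ _ => (0:A)) = 0 := by
  unfold CS; simp

include hgs in
lemma CS_swap12 (f : Fin m → Fin m → Fin m → Fin m → A) :
    CS ginv f = CS ginv (fun i j k l => f j i k l) := by
  unfold CS
  rw [sum4_flat, sum4_flat]
  refine Fintype.sum_equiv ⟨fun x => (x.2.1, x.1, x.2.2), fun x => (x.2.1, x.1, x.2.2),
    fun x => rfl, fun x => rfl⟩ _ _ ?_
  rintro ⟨i, j, k, l⟩
  simp only [Equiv.coe_fn_mk]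
  rw [hgs i j]

include hgs in
lemma CS_swap34 (f : Fin m → Fin m → Fin m → Fin m → A) :
    CS ginv f = CS ginv (fun i j k l => f i j l k) := by
  unfold CS
  rw [sum4_flat, sum4_flat]
  refine Fintype.sum_equiv ⟨fun x => (x.1, x.2.1, x.2.2.2, x.2.2.1),
    fun x => (x.1, x.2.1, x.2.2.2, x.2.2.1), fun x => rfl, fun x => rfl⟩ _ _ ?_
  rintro ⟨i, j, k, l⟩
  simp only [Equiv.coe_fn_mk]
  rw [hgs k l]

lemma CS_swapPairs (f : Fin m → Fin m → Fin m → Fin m → A) :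
    CS ginv f = CS ginv (fun i j k l => f k l i j) := by
  unfold CS
  rw [sum4_flat, sum4_flat]
  refine Fintype.sum_equiv ⟨fun x => (x.2.2.1, x.2.2.2, x.1, x.2.1),
    fun x => (x.2.2.1, x.2.2.2, x.1, x.2.1), fun x => rfl, fun x => rfl⟩ _ _ ?_
  rintro ⟨i, j, k, l⟩
  simp only [Equiv.coe_fn_mk]
  ring

include hgs in
lemma CS_renameE1 (h : Fin m → Fin m → Fin m → Fin m → A) :
    CS ginv (fun i j k l => h l i j k) = CS ginv (fun i j k l => h i k l j) := by
  unfold CS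
  rw [sum4_flat, sum4_flat]
  refine Fintype.sum_equiv ⟨fun x => (x.2.2.2, x.2.2.1, x.1, x.2.1),
    fun x => (x.2.2.1, x.2.2.2, x.2.1, x.1), fun x => rfl, fun x => rfl⟩ _ _ ?_
  rintro ⟨i, j, k, l⟩
  simp only [Equiv.coe_fn_mk]
  rw [hgs l k]
  ring

end SumTools

section Slide
variable {m : ℕ} {e : Fin m → V} {ginv : Fin m → Fin m → A}

/-- The fundamental slide lemma: a `J` may be moved across a contracted pair of indices. -/
lemma slide (hc : Core g J nabla act lb)
    (hsp : ∀ v : V, ∃ c : Fin m → A, v = ∑ i, c i • e i)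
    (hginv : ∀ i j, (∑ k, ginv i k * g (e k) (e j)) = if i = j then (1:A) else 0)
    (B : V → V → A)
    (hBal : ∀ x x' y, B (x + x') y = B x y + B x' y)
    (hBsl : ∀ (a : A) x y, B (a • x) y = a * B x y)
    (hBar : ∀ x y y', B x (y + y') = B x y + B x y')
    (hBsr : ∀ (a : A) x y, B x (a • y) = a * B x y) :
    (∑ a, ∑ b, ginv a b * B (J (e a)) (e b)) = ∑ a, ∑ b, ginv a b * B (e a) (J (e b)) := by
  classical
  have hgs := ginv_symm (e := e) (ginv := ginv) hc.g_symm hginv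
  have hswap : ∀ a p, g (J (e a)) (e p) = g (J (e p)) (e a) := by
    intro a p; rw [gJ hc, hc.g_symm]
  have key : ∀ a b, B (J (e a)) (e b)
      = ∑ p, ∑ q, ginv p q * (g (J (e p)) (e a) * B (e q) (e b)) := by
    intro a b
    rw [expand_linear hc hsp hginv (fun x => B x (e b)) (fun x y => hBal x y (e b))
      (fun c x => hBsl c x (e b)) (J (e a))]
    exact Finset.sum_congr rfl fun p _ => Finset.sum_congr rfl fun q _ => by rw [hswap a p]
  calc (∑ a, ∑ b, ginv a b * B (J (e a)) (e b))
      = CS ginv (fun a b p q => g (J (e p)) (e a) * B (e q) (e b)) := by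
        unfold CS
        refine Finset.sum_congr rfl fun a _ => Finset.sum_congr rfl fun b _ => ?_
        rw [key a b, Finset.mul_sum]
        refine Finset.sum_congr rfl fun p _ => ?_
        rw [Finset.mul_sum]
        exact Finset.sum_congr rfl fun q _ => by ring
    _ = CS ginv (fun a b p q => g (J (e a)) (e p) * B (e b) (e q)) := by
        rw [CS_swapPairs]
    _ = ∑ a, ∑ b, ginv a b * B (e b) (J (e a)) := by
        unfold CS
        refine Finset.sum_congr rfl fun a _ => Finset.sum_congr rfl fun b _ => ?_
        rw [expand_linear hc hsp hginv (fun x => B (e b) x) (fun x y => hBar (e b) x y)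
          (fun c x => hBsr c (e b) x) (J (e a)), Finset.mul_sum]
        refine Finset.sum_congr rfl fun p _ => ?_
        rw [Finset.mul_sum]
        exact Finset.sum_congr rfl fun q _ => by ring
    _ = ∑ a, ∑ b, ginv a b * B (e a) (J (e b)) := by
        rw [Finset.sum_comm]
        exact Finset.sum_congr rfl fun a _ => Finset.sum_congr rfl fun b _ => by rw [hgs b a]

/-- Slide on the first contracted pair of a quadruple contraction. -/
lemma CS_slide1 (hc : Core g J nabla act lb)
    (hsp : ∀ v : V, ∃ c : Fin m → A, v = ∑ i, c i • e i)
    (hginv : ∀ i j, (∑ k, ginv i k * g (e k) (e j)) = if i = j then (1:A) else 0)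
    (F : V → V → Fin m → Fin m → A)
    (hFal : ∀ x x' y k l, F (x + x') y k l = F x y k l + F x' y k l)
    (hFsl : ∀ (a : A) x y k l, F (a • x) y k l = a * F x y k l)
    (hFar : ∀ x y y' k l, F x (y + y') k l = F x y k l + F x y' k l)
    (hFsr : ∀ (a : A) x y k l, F x (a • y) k l = a * F x y k l) :
    CS ginv (fun i j k l => F (J (e i)) (e j) k l)
      = CS ginv (fun i j k l => F (e i) (J (e j)) k l) := by
  classical
  have hfac : ∀ (G : V → V → Fin m → Fin m → A) (x y : V),
      (∑ k, ∑ l, ginv k l * G x y k l) = (fun x y => ∑ k, ∑ l, ginv k l * G x y k l) x y :=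
    fun _ _ _ => rfl
  have main := slide (e := e) (ginv := ginv) hc hsp hginv
    (fun x y => ∑ k, ∑ l, ginv k l * F x y k l)
    (by intro x x' y; simp only [hFal, mul_add, Finset.sum_add_distrib])
    (by intro a x y; simp only [hFsl, Finset.mul_sum]
        exact Finset.sum_congr rfl fun k _ => Finset.sum_congr rfl fun l _ => by ring)
    (by intro x y y'; simp only [hFar, mul_add, Finset.sum_add_distrib])
    (by intro a x y; simp only [hFsr, Finset.mul_sum]
        exact Finset.sum_congr rfl fun k _ => Finset.sum_congr rfl fun l _ => by ring)
  unfold CS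
  calc (∑ i, ∑ j, ∑ k, ∑ l, ginv i j * ginv k l * F (J (e i)) (e j) k l)
      = ∑ i, ∑ j, ginv i j * ∑ k, ∑ l, ginv k l * F (J (e i)) (e j) k l := by
        refine Finset.sum_congr rfl fun i _ => Finset.sum_congr rfl fun j _ => ?_
        rw [Finset.mul_sum]
        refine Finset.sum_congr rfl fun k _ => ?_
        rw [Finset.mul_sum]
        exact Finset.sum_congr rfl fun l _ => by ring
    _ = ∑ i, ∑ j, ginv i j * ∑ k, ∑ l, ginv k l * F (e i) (J (e j)) k l := main
    _ = ∑ i, ∑ j, ∑ k, ∑ l, ginv i j * ginv k l * F (e i) (J (e j)) k l := by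
        refine Finset.sum_congr rfl fun i _ => Finset.sum_congr rfl fun j _ => ?_
        rw [Finset.mul_sum]
        refine Finset.sum_congr rfl fun k _ => ?_
        rw [Finset.mul_sum]
        exact Finset.sum_congr rfl fun l _ => by ring

/-- Slide on the second contracted pair of a quadruple contraction. -/
lemma CS_slide2 (hc : Core g J nabla act lb)
    (hsp : ∀ v : V, ∃ c : Fin m → A, v = ∑ i, c i • e i)
    (hginv : ∀ i j, (∑ k, ginv i k * g (e k) (e j)) = if i = j then (1:A) else 0)
    (F : Fin m → Fin m → V → V → A)
    (hFal : ∀ i j x x' y, F i j (x + x') y = F i j x y + F i j x' y)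
    (hFsl : ∀ i j (a : A) x y, F i j (a • x) y = a * F i j x y)
    (hFar : ∀ i j x y y', F i j x (y + y') = F i j x y + F i j x y')
    (hFsr : ∀ i j (a : A) x y, F i j x (a • y) = a * F i j x y) :
    CS ginv (fun i j k l => F i j (J (e k)) (e l))
      = CS ginv (fun i j k l => F i j (e k) (J (e l))) := by
  classical
  unfold CS
  refine Finset.sum_congr rfl fun i _ => Finset.sum_congr rfl fun j _ => ?_
  have main := slide (e := e) (ginv := ginv) hc hsp hginv (F i j)
    (hFal i j) (hFsl i j) (hFar i j) (hFsr i j)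
  calc (∑ k, ∑ l, ginv i j * ginv k l * F i j (J (e k)) (e l))
      = ginv i j * ∑ k, ∑ l, ginv k l * F i j (J (e k)) (e l) := by
        rw [Finset.mul_sum]
        refine Finset.sum_congr rfl fun k _ => ?_
        rw [Finset.mul_sum]
        exact Finset.sum_congr rfl fun l _ => by ring
    _ = ginv i j * ∑ k, ∑ l, ginv k l * F i j (e k) (J (e l)) := by rw [main]
    _ = ∑ k, ∑ l, ginv i j * ginv k l * F i j (e k) (J (e l)) := by
        rw [Finset.mul_sum]
        refine Finset.sum_congr rfl fun k _ => ?_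
        rw [Finset.mul_sum]
        exact Finset.sum_congr rfl fun l _ => by ring

end Slide

section Traces
variable {m : ℕ} {e : Fin m → V} {ginv : Fin m → Fin m → A}

lemma trace_covJ (hc : Core g J nabla act lb)
    (hsp : ∀ v : V, ∃ c : Fin m → A, v = ∑ i, c i • e i)
    (hginv : ∀ i j, (∑ k, ginv i k * g (e k) (e j)) = if i = j then (1:A) else 0)
    (v : V) :
    (∑ k, ∑ l, ginv k l * g (covJ nabla J v (e k)) (e l)) = 0 := by
  classical
  have hslide := slide (e := e) (ginv := ginv) hc hsp hginv
    (fun x y => g (covJ nabla J v x) (J y))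
    (by intro x x' y; (try dsimp only); rw [covJ_addr hc, hc.g_addl])
    (by intro a x y; (try dsimp only); rw [covJ_smulr hc, hc.g_smull])
    (by intro x y y'; (try dsimp only); rw [hc.J_add, g_addr hc])
    (by intro a x y; (try dsimp only); rw [hc.J_smul, g_smulr hc])
  have h1 : (∑ k, ∑ l, ginv k l * g (covJ nabla J v (J (e k))) (J (e l)))
      = ∑ k, ∑ l, ginv k l * g (covJ nabla J v (e k)) (e l) := by
    refine Finset.sum_congr rfl fun k _ => Finset.sum_congr rfl fun l _ => ?_
    rw [covJ_J hc, g_negl hc, hc.norden, neg_neg]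
  have h2 : (∑ k, ∑ l, ginv k l * g (covJ nabla J v (e k)) (J (J (e l))))
      = -(∑ k, ∑ l, ginv k l * g (covJ nabla J v (e k)) (e l)) := by
    rw [← Finset.sum_neg_distrib]
    refine Finset.sum_congr rfl fun k _ => ?_
    rw [← Finset.sum_neg_distrib]
    refine Finset.sum_congr rfl fun l _ => ?_
    rw [hc.J_sq, g_negr hc, mul_neg]
  apply half
  calc (∑ k, ∑ l, ginv k l * g (covJ nabla J v (e k)) (e l))
        + (∑ k, ∑ l, ginv k l * g (covJ nabla J v (e k)) (e l))
      = (∑ k, ∑ l, ginv k l * g (covJ nabla J v (J (e k))) (J (e l)))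
        + (∑ k, ∑ l, ginv k l * g (covJ nabla J v (e k)) (e l)) := by rw [h1]
    _ = (∑ k, ∑ l, ginv k l * g (covJ nabla J v (e k)) (J (J (e l))))
        + (∑ k, ∑ l, ginv k l * g (covJ nabla J v (e k)) (e l)) := by rw [hslide]
    _ = 0 := by rw [h2]; ring

lemma omega_zero (hc : Core g J nabla act lb)
    (hsp : ∀ v : V, ∃ c : Fin m → A, v = ∑ i, c i • e i)
    (hginv : ∀ i j, (∑ k, ginv i k * g (e k) (e j)) = if i = j then (1:A) else 0)
    (W3 : ∀ X Y Z, Ften g nabla J X Y Z + Ften g nabla J Y Z X + Ften g nabla J Z X Y = 0)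
    (v : V) :
    (∑ k, ∑ l, ginv k l * g (covJ nabla J (e k) (e l)) v) = 0 := by
  classical
  have hgs := ginv_symm (e := e) (ginv := ginv) hc.g_symm hginv
  have hW : ∀ k l, g (covJ nabla J (e k) (e l)) v
      + g (covJ nabla J (e l) (e k)) v + g (covJ nabla J v (e k)) (e l) = 0 := by
    intro k l
    have h := W3 (e k) (e l) v
    unfold Ften at h
    have h2 : g (covJ nabla J (e l) v) (e k) = g (covJ nabla J (e l) (e k)) v := by
      rw [selfadj hc, hc.g_symm]
    rw [h2] at h
    exact h
  have hsplit : (∑ k, ∑ l, ginv k l * g (covJ nabla J (e k) (e l)) v)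
      + (∑ k, ∑ l, ginv k l * g (covJ nabla J (e l) (e k)) v)
      + (∑ k, ∑ l, ginv k l * g (covJ nabla J v (e k)) (e l)) = 0 := by
    rw [← Finset.sum_add_distrib, ← Finset.sum_add_distrib]
    apply Finset.sum_eq_zero
    intro k _
    rw [← Finset.sum_add_distrib, ← Finset.sum_add_distrib]
    apply Finset.sum_eq_zero
    intro l _
    rw [← mul_add, ← mul_add, hW k l, mul_zero]
  have hswap : (∑ k, ∑ l, ginv k l * g (covJ nabla J (e l) (e k)) v)
      = ∑ k, ∑ l, ginv k l * g (covJ nabla J (e k) (e l)) v := by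
    rw [Finset.sum_comm]
    exact Finset.sum_congr rfl fun k _ => Finset.sum_congr rfl fun l _ => by rw [hgs l k]
  have htr := trace_covJ (e := e) (ginv := ginv) hc hsp hginv v
  apply half
  linear_combination hsplit - hswap - htr

end Traces

section SixTools
variable {m : ℕ} {e : Fin m → V} {ginv : Fin m → Fin m → A}

lemma SS_congr {f h : Fin m → Fin m → Fin m → Fin m → Fin m → Fin m → A}
    (hfh : ∀ i j k l p q, f i j k l p q = h i j k l p q) : SS ginv f = SS ginv h := by
  unfold SS; simp only [hfh]

lemma CS_to_SS (h : Fin m → Fin m → Fin m → Fin m → Fin m → Fin m → A) :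
    CS ginv (fun i j k l => ∑ p, ∑ q, ginv p q * h i j k l p q) = SS ginv h := by
  unfold CS SS
  refine Finset.sum_congr rfl fun i _ => Finset.sum_congr rfl fun j _ =>
    Finset.sum_congr rfl fun k _ => Finset.sum_congr rfl fun l _ => ?_
  rw [Finset.mul_sum]
  refine Finset.sum_congr rfl fun p _ => ?_
  rw [Finset.mul_sum]
  exact Finset.sum_congr rfl fun q _ => by ring

lemma SS_rename6 (hgs : ∀ i j, ginv i j = ginv j i)
    (h : Fin m → Fin m → Fin m → Fin m → Fin m → Fin m → A) :
    SS ginv (fun i j k l p q => h j p l q i k)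
      = SS ginv (fun i j k l p q => h k j p i l q) := by
  unfold SS
  rw [sum6_flat, sum6_flat]
  refine Fintype.sum_equiv
    ⟨fun x => (x.2.2.2.2.2, x.2.2.2.2.1, x.2.1, x.1, x.2.2.2.1, x.2.2.1),
     fun x => (x.2.2.2.1, x.2.2.1, x.2.2.2.2.2, x.2.2.2.2.1, x.2.1, x.1),
     fun x => rfl, fun x => rfl⟩ _ _ ?_
  rintro ⟨i, j, k, l, p, q⟩
  simp only [Equiv.coe_fn_mk]
  rw [hgs q p, hgs j i, hgs l k]
  ring

end SixTools

section Sigma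
variable {m : ℕ} {e : Fin m → V} {ginv : Fin m → Fin m → A}

/-- The contracted quadratic consequence of W₃ : `L + 2σ = 0`. -/
lemma sigma_rel (hc : Core g J nabla act lb)
    (hsp : ∀ v : V, ∃ c : Fin m → A, v = ∑ i, c i • e i)
    (hginv : ∀ i j, (∑ k, ginv i k * g (e k) (e j)) = if i = j then (1:A) else 0)
    (W3 : ∀ X Y Z, Ften g nabla J X Y Z + Ften g nabla J Y Z X + Ften g nabla J Z X Y = 0) :
    CS ginv (fun i j k l => g (covJ nabla J (e i) (e k)) (covJ nabla J (e j) (e l)))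
      + CS ginv (fun i j k l => g (covJ nabla J (e i) (e l)) (covJ nabla J (e k) (e j)))
      + CS ginv (fun i j k l => g (covJ nabla J (e i) (e l)) (covJ nabla J (e k) (e j)))
      = 0 := by
  classical
  have hgs := ginv_symm (e := e) (ginv := ginv) hc.g_symm hginv
  -- the three W3 contraction terms
  have hzero :
      CS ginv (fun i j k l =>
        Ften g nabla J (e i) (e k) (covJ nabla J (e j) (e l)))
      + CS ginv (fun i j k l =>
        Ften g nabla J (e k) (covJ nabla J (e j) (e l)) (e i))
      + CS ginv (fun i j k l =>
        Ften g nabla J (covJ nabla J (e j) (e l)) (e i) (e k)) = 0 := by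
    rw [← CS_add, ← CS_add]
    rw [CS_congr (h := fun _ _ _ _ => (0:A)) (fun i j k l => W3 (e i) (e k) _), CS_zero]
  have hT1 : CS ginv (fun i j k l =>
        Ften g nabla J (e i) (e k) (covJ nabla J (e j) (e l)))
      = CS ginv (fun i j k l =>
        g (covJ nabla J (e i) (e k)) (covJ nabla J (e j) (e l))) :=
    CS_congr (fun i j k l => rfl)
  have hT2 : CS ginv (fun i j k l =>
        Ften g nabla J (e k) (covJ nabla J (e j) (e l)) (e i))
      = CS ginv (fun i j k l =>
        g (covJ nabla J (e i) (e l)) (covJ nabla J (e k) (e j))) := by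
    have step1 : CS ginv (fun i j k l =>
        Ften g nabla J (e k) (covJ nabla J (e j) (e l)) (e i))
        = CS ginv (fun i j k l =>
          g (covJ nabla J (e j) (e l)) (covJ nabla J (e k) (e i))) :=
      CS_congr (fun i j k l => by unfold Ften; rw [selfadj hc])
    rw [step1]
    rw [CS_swap12 hgs (fun i j k l =>
      g (covJ nabla J (e j) (e l)) (covJ nabla J (e k) (e i)))]
  have hT3 : CS ginv (fun i j k l =>
        Ften g nabla J (covJ nabla J (e j) (e l)) (e i) (e k))
      = CS ginv (fun i j k l =>
        g (covJ nabla J (e i) (e l)) (covJ nabla J (e k) (e j))) := by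
    have step1 : CS ginv (fun i j k l =>
        Ften g nabla J (covJ nabla J (e j) (e l)) (e i) (e k))
        = CS ginv (fun i j k l => ∑ p, ∑ q, ginv p q *
            (g (covJ nabla J (e j) (e l)) (e p) * Ften g nabla J (e q) (e i) (e k))) :=
      CS_congr (fun i j k l =>
        expand_linear hc hsp hginv (fun w => Ften g nabla J w (e i) (e k))
          (fun x y => F_addl hc x y (e i) (e k))
          (fun a x => F_smull hc a x (e i) (e k)) (covJ nabla J (e j) (e l)))
    have step2 := CS_to_SS (ginv := ginv) (fun i j k l p q =>
        g (covJ nabla J (e j) (e l)) (e p) * Ften g nabla J (e q) (e i) (e k))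
    have step3 : SS ginv (fun i j k l p q =>
          g (covJ nabla J (e j) (e l)) (e p) * Ften g nabla J (e q) (e i) (e k))
        = SS ginv (fun i j k l p q =>
          Ften g nabla J (e j) (e p) (e l) * Ften g nabla J (e q) (e i) (e k)) :=
      SS_congr (fun i j k l p q => by
        have : g (covJ nabla J (e j) (e l)) (e p) = Ften g nabla J (e j) (e l) (e p) := rfl
        rw [this, F_sym hc (e j) (e l) (e p)])
    have step4 := SS_rename6 (ginv := ginv) hgs (fun a b c d u v =>
        Ften g nabla J (e a) (e b) (e c) * Ften g nabla J (e d) (e u) (e v))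
    have step5 : CS ginv (fun i j k l =>
          g (covJ nabla J (e i) (e l)) (covJ nabla J (e k) (e j)))
        = SS ginv (fun i j k l p q =>
          Ften g nabla J (e k) (e j) (e p) * Ften g nabla J (e i) (e l) (e q)) := by
      have e1 : CS ginv (fun i j k l =>
            g (covJ nabla J (e i) (e l)) (covJ nabla J (e k) (e j)))
          = CS ginv (fun i j k l => ∑ p, ∑ q, ginv p q *
              (g (covJ nabla J (e k) (e j)) (e p)
                * g (covJ nabla J (e i) (e l)) (e q))) :=
        CS_congr (fun i j k l =>
          expand_linear hc hsp hginv (fun w => g (covJ nabla J (e i) (e l)) w)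
            (fun x y => g_addr hc _ x y)
            (fun a x => g_smulr hc a _ x) (covJ nabla J (e k) (e j)))
      rw [e1]
      exact CS_to_SS (ginv := ginv) _
    rw [step1, step2, step3, step4, ← step5]
  rw [hT1, hT2, hT3] at hzero
  exact hzero

end Sigma

section Main
variable {m : ℕ} {e : Fin m → V} {ginv : Fin m → Fin m → A}

lemma main_identity (hc : Core g J nabla act lb)
    (hsp : ∀ v : V, ∃ c : Fin m → A, v = ∑ i, c i • e i)
    (hginv : ∀ i j, (∑ k, ginv i k * g (e k) (e j)) = if i = j then (1:A) else 0)
    (W3 : ∀ X Y Z, Ften g nabla J X Y Z + Ften g nabla J Y Z X + Ften g nabla J Z X Y = 0) :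
    CS ginv (fun i j k l => g (covJ nabla J (e i) (e k)) (covJ nabla J (e j) (e l)))
      = -2 * ((CS ginv (fun i j k l => curv4 g nabla lb (e i) (e k) (e l) (e j))) + (CS ginv (fun i j k l => curv4 g nabla lb (e i) (e k) (J (e l)) (J (e j))))) := by
  classical
  have hgs := ginv_symm (e := e) (ginv := ginv) hc.g_symm hginv
  -- (a) cyclic identity around Q9
  have hQ9a : CS ginv (fun i j k l => covF g nabla J act (e i) (J (e l)) (e j) (e k)) = CS ginv (fun i j k l => covF g nabla J act (e i) (e k) (J (e l)) (e j)) := by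
    have s := CS_slide2 (e := e) (ginv := ginv) hc hsp hginv
      (fun i j x y => covF g nabla J act (e i) y (e j) x)
      (fun i j x x' y => by (try dsimp only); rw [covF_add4 hc])
      (fun i j a x y => by (try dsimp only); rw [covF_smul4 hc])
      (fun i j x y y' => by (try dsimp only); rw [covF_addm hc])
      (fun i j a x y => by (try dsimp only); rw [covF_smulm hc])
    calc CS ginv (fun i j k l => covF g nabla J act (e i) (J (e l)) (e j) (e k)) = CS ginv (fun i j k l => covF g nabla J act (e i) (e l) (e j) (J (e k))) := s.symm
      _ = CS ginv (fun i j k l => covF g nabla J act (e i) (e k) (e j) (J (e l))) :=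
          CS_swap34 hgs (fun i j k l => covF g nabla J act (e i) (e l) (e j) (J (e k)))
      _ = CS ginv (fun i j k l => covF g nabla J act (e i) (e k) (J (e l)) (e j)) := CS_congr (fun i j k l => covF_sym34 hc (e i) (e k) (e j) (J (e l)))
  have ha : CS ginv (fun i j k l => covF g nabla J act (e i) (e k) (J (e l)) (e j)) + CS ginv (fun i j k l => covF g nabla J act (e i) (e k) (J (e l)) (e j)) + CS ginv (fun i j k l => covF g nabla J act (e i) (e j) (e k) (J (e l))) = 0 := by
    have h0 : CS ginv (fun i j k l => covF g nabla J act (e i) (e k) (J (e l)) (e j)) + CS ginv (fun i j k l => covF g nabla J act (e i) (J (e l)) (e j) (e k)) + CS ginv (fun i j k l => covF g nabla J act (e i) (e j) (e k) (J (e l))) = 0 := by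
      rw [← CS_add, ← CS_add]
      rw [CS_congr (h := fun _ _ _ _ => (0:A))
        (fun i j k l => cyc hc W3 (e i) (e k) (J (e l)) (e j)), CS_zero]
    rw [hQ9a] at h0
    exact h0
  -- (b) ddag around Q8
  have hQ8a : CS ginv (fun i j k l => covF g nabla J act (e i) (e j) (J (e k)) (e l)) = CS ginv (fun i j k l => covF g nabla J act (e i) (e j) (e k) (J (e l))) :=
    CS_slide2 (e := e) (ginv := ginv) hc hsp hginv
      (fun i j x y => covF g nabla J act (e i) (e j) x y)
      (fun i j x x' y => by (try dsimp only); rw [covF_add3 hc])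
      (fun i j a x y => by (try dsimp only); rw [covF_smul3 hc])
      (fun i j x y y' => by (try dsimp only); rw [covF_add4 hc])
      (fun i j a x y => by (try dsimp only); rw [covF_smul4 hc])
  have hb : CS ginv (fun i j k l => covF g nabla J act (e i) (e j) (e k) (J (e l))) + CS ginv (fun i j k l => covF g nabla J act (e i) (e j) (e k) (J (e l))) = -(CS ginv (fun i j k l => g (covJ nabla J (e i) (e k)) (covJ nabla J (e j) (e l)))) - CS ginv (fun i j k l => g (covJ nabla J (e i) (e k)) (covJ nabla J (e j) (e l))) := by
    have h0 : CS ginv (fun i j k l => covF g nabla J act (e i) (e j) (J (e k)) (e l)) + CS ginv (fun i j k l => covF g nabla J act (e i) (e j) (e k) (J (e l)))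
        = CS ginv (fun i j k l =>
            -(g (covJ nabla J (e i) (e k)) (covJ nabla J (e j) (e l)))
              - g (covJ nabla J (e j) (e k)) (covJ nabla J (e i) (e l))) := by
      rw [← CS_add]
      exact CS_congr (fun i j k l => ddag hc (e i) (e j) (e k) (e l))
    rw [CS_sub, CS_neg] at h0
    have h1 : CS ginv (fun i j k l => g (covJ nabla J (e j) (e k)) (covJ nabla J (e i) (e l))) = CS ginv (fun i j k l => g (covJ nabla J (e i) (e k)) (covJ nabla J (e j) (e l))) := by
      rw [CS_swap12 hgs (fun i j k l => g (covJ nabla J (e j) (e k)) (covJ nabla J (e i) (e l)))]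
    rw [hQ8a, h1] at h0
    exact h0
  -- (c) ddag around P'
  have hcc : CS ginv (fun i j k l => covF g nabla J act (e k) (e i) (J (e l)) (e j)) + CS ginv (fun i j k l => covF g nabla J act (e k) (e i) (e l) (J (e j))) = -(CS ginv (fun i j k l => g (covJ nabla J (e k) (e l)) (covJ nabla J (e i) (e j)))) - CS ginv (fun i j k l => g (covJ nabla J (e i) (e l)) (covJ nabla J (e k) (e j))) := by
    have h0 : CS ginv (fun i j k l => covF g nabla J act (e k) (e i) (J (e l)) (e j)) + CS ginv (fun i j k l => covF g nabla J act (e k) (e i) (e l) (J (e j)))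
        = CS ginv (fun i j k l =>
            -(g (covJ nabla J (e k) (e l)) (covJ nabla J (e i) (e j)))
              - g (covJ nabla J (e i) (e l)) (covJ nabla J (e k) (e j))) := by
      rw [← CS_add]
      exact CS_congr (fun i j k l => ddag hc (e k) (e i) (e l) (e j))
    rw [CS_sub, CS_neg] at h0
    exact h0
  -- (d) cyclic around Q11
  have hd : CS ginv (fun i j k l => covF g nabla J act (e k) (e i) (J (e l)) (e j)) + CS ginv (fun i j k l => covF g nabla J act (e k) (J (e l)) (e i) (e j)) + CS ginv (fun i j k l => covF g nabla J act (e k) (e j) (e i) (J (e l))) = 0 := by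
    have h0 : CS ginv (fun i j k l => covF g nabla J act (e k) (e i) (J (e l)) (e j)) + CS ginv (fun i j k l => covF g nabla J act (e k) (J (e l)) (e j) (e i)) + CS ginv (fun i j k l => covF g nabla J act (e k) (e j) (e i) (J (e l))) = 0 := by
      rw [← CS_add, ← CS_add]
      rw [CS_congr (h := fun _ _ _ _ => (0:A))
        (fun i j k l => cyc hc W3 (e k) (e i) (J (e l)) (e j)), CS_zero]
    have h1 : CS ginv (fun i j k l => covF g nabla J act (e k) (J (e l)) (e j) (e i)) = CS ginv (fun i j k l => covF g nabla J act (e k) (J (e l)) (e i) (e j)) :=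
      CS_congr (fun i j k l => covF_sym34 hc (e k) (J (e l)) (e j) (e i))
    rw [h1] at h0
    exact h0
  -- (e) ddag around Q12
  have he : CS ginv (fun i j k l => covF g nabla J act (e k) (J (e j)) (e i) (e l)) + CS ginv (fun i j k l => covF g nabla J act (e k) (e j) (e i) (J (e l))) = -(CS ginv (fun i j k l => g (covJ nabla J (e i) (e l)) (covJ nabla J (e k) (e j)))) - CS ginv (fun i j k l => g (covJ nabla J (e k) (e l)) (covJ nabla J (e i) (e j))) := by
    have h0 : CS ginv (fun i j k l => covF g nabla J act (e k) (e j) (J (e i)) (e l)) + CS ginv (fun i j k l => covF g nabla J act (e k) (e j) (e i) (J (e l)))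
        = CS ginv (fun i j k l =>
            -(g (covJ nabla J (e k) (e i)) (covJ nabla J (e j) (e l)))
              - g (covJ nabla J (e j) (e i)) (covJ nabla J (e k) (e l))) := by
      rw [← CS_add]
      exact CS_congr (fun i j k l => ddag hc (e k) (e j) (e i) (e l))
    rw [CS_sub, CS_neg] at h0
    have h1 : CS ginv (fun i j k l => covF g nabla J act (e k) (e j) (J (e i)) (e l)) = CS ginv (fun i j k l => covF g nabla J act (e k) (J (e j)) (e i) (e l)) :=
      CS_slide1 (e := e) (ginv := ginv) hc hsp hginv
        (fun x y k l => covF g nabla J act (e k) y x (e l))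
        (fun x x' y k l => by (try dsimp only); rw [covF_add3 hc])
        (fun a x y k l => by (try dsimp only); rw [covF_smul3 hc])
        (fun x y y' k l => by (try dsimp only); rw [covF_addm hc])
        (fun a x y k l => by (try dsimp only); rw [covF_smulm hc])
    have h2 : CS ginv (fun i j k l => g (covJ nabla J (e k) (e i)) (covJ nabla J (e j) (e l))) = CS ginv (fun i j k l => g (covJ nabla J (e i) (e l)) (covJ nabla J (e k) (e j))) := by
      have s1 : CS ginv (fun i j k l => g (covJ nabla J (e k) (e i)) (covJ nabla J (e j) (e l)))
          = CS ginv (fun i j k l => g (covJ nabla J (e j) (e l)) (covJ nabla J (e k) (e i))) :=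
        CS_congr (fun i j k l => hc.g_symm _ _)
      rw [s1, CS_swap12 hgs (fun i j k l => g (covJ nabla J (e j) (e l)) (covJ nabla J (e k) (e i)))]
    have h3 : CS ginv (fun i j k l => g (covJ nabla J (e j) (e i)) (covJ nabla J (e k) (e l))) = CS ginv (fun i j k l => g (covJ nabla J (e k) (e l)) (covJ nabla J (e i) (e j))) := by
      have s1 : CS ginv (fun i j k l => g (covJ nabla J (e j) (e i)) (covJ nabla J (e k) (e l)))
          = CS ginv (fun i j k l => g (covJ nabla J (e k) (e l)) (covJ nabla J (e j) (e i))) :=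
        CS_congr (fun i j k l => hc.g_symm _ _)
      rw [s1, CS_swap12 hgs (fun i j k l => g (covJ nabla J (e k) (e l)) (covJ nabla J (e j) (e i)))]
    rw [h1, h2, h3] at h0
    exact h0
  -- (f) cyclic around Q6
  have hf : CS ginv (fun i j k l => covF g nabla J act (e k) (J (e j)) (e i) (e l)) + CS ginv (fun i j k l => covF g nabla J act (e k) (e i) (e l) (J (e j))) + CS ginv (fun i j k l => covF g nabla J act (e k) (e l) (e i) (J (e j))) = 0 := by
    have h0 : CS ginv (fun i j k l => covF g nabla J act (e k) (J (e j)) (e i) (e l)) + CS ginv (fun i j k l => covF g nabla J act (e k) (e i) (e l) (J (e j))) + CS ginv (fun i j k l => covF g nabla J act (e k) (e l) (J (e j)) (e i)) = 0 := by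
      rw [← CS_add, ← CS_add]
      rw [CS_congr (h := fun _ _ _ _ => (0:A))
        (fun i j k l => cyc hc W3 (e k) (J (e j)) (e i) (e l)), CS_zero]
    have h1 : CS ginv (fun i j k l => covF g nabla J act (e k) (e l) (J (e j)) (e i)) = CS ginv (fun i j k l => covF g nabla J act (e k) (e l) (e i) (J (e j))) :=
      CS_congr (fun i j k l => covF_sym34 hc (e k) (e l) (J (e j)) (e i))
    rw [h1] at h0
    exact h0
  -- (g) ddag around R1
  have hg' : CS ginv (fun i j k l => covF g nabla J act (e k) (e l) (e i) (J (e j))) + CS ginv (fun i j k l => covF g nabla J act (e k) (e l) (e i) (J (e j))) = -(CS ginv (fun i j k l => g (covJ nabla J (e i) (e k)) (covJ nabla J (e j) (e l)))) - CS ginv (fun i j k l => g (covJ nabla J (e i) (e k)) (covJ nabla J (e j) (e l))) := by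
    have h0 : CS ginv (fun i j k l => covF g nabla J act (e k) (e l) (J (e i)) (e j)) + CS ginv (fun i j k l => covF g nabla J act (e k) (e l) (e i) (J (e j)))
        = CS ginv (fun i j k l =>
            -(g (covJ nabla J (e k) (e i)) (covJ nabla J (e l) (e j)))
              - g (covJ nabla J (e l) (e i)) (covJ nabla J (e k) (e j))) := by
      rw [← CS_add]
      exact CS_congr (fun i j k l => ddag hc (e k) (e l) (e i) (e j))
    rw [CS_sub, CS_neg] at h0
    have h1 : CS ginv (fun i j k l => covF g nabla J act (e k) (e l) (J (e i)) (e j)) = CS ginv (fun i j k l => covF g nabla J act (e k) (e l) (e i) (J (e j))) :=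
      CS_slide1 (e := e) (ginv := ginv) hc hsp hginv
        (fun x y k l => covF g nabla J act (e k) (e l) x y)
        (fun x x' y k l => by (try dsimp only); rw [covF_add3 hc])
        (fun a x y k l => by (try dsimp only); rw [covF_smul3 hc])
        (fun x y y' k l => by (try dsimp only); rw [covF_add4 hc])
        (fun a x y k l => by (try dsimp only); rw [covF_smul4 hc])
    have h2 : CS ginv (fun i j k l => g (covJ nabla J (e k) (e i)) (covJ nabla J (e l) (e j))) = CS ginv (fun i j k l => g (covJ nabla J (e i) (e k)) (covJ nabla J (e j) (e l))) := by
      rw [CS_swapPairs (fun i j k l => g (covJ nabla J (e k) (e i)) (covJ nabla J (e l) (e j)))]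
    have h3 : CS ginv (fun i j k l => g (covJ nabla J (e l) (e i)) (covJ nabla J (e k) (e j))) = CS ginv (fun i j k l => g (covJ nabla J (e i) (e k)) (covJ nabla J (e j) (e l))) := by
      rw [CS_swap34 hgs (fun i j k l => g (covJ nabla J (e l) (e i)) (covJ nabla J (e k) (e j)))]
      rw [CS_swapPairs (fun i j k l => g (covJ nabla J (e k) (e i)) (covJ nabla J (e l) (e j)))]
    rw [h1, h2, h3] at h0
    exact h0
  -- (h) star between Q10 and Q13
  have hd1 : CS ginv (fun i j k l => curv4 g nabla lb (e k) (J (e l)) (J (e i)) (e j)) = 0 := by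
    have s := CS_slide2 (e := e) (ginv := ginv) hc hsp hginv
      (fun i j x y => curv4 g nabla lb x y (J (e i)) (e j))
      (fun i j x x' y => by (try dsimp only); rw [curv4_addl hc])
      (fun i j a x y => by (try dsimp only); rw [curv4_smull hc])
      (fun i j x y y' => by (try dsimp only); rw [curv4_addm hc])
      (fun i j a x y => by (try dsimp only); rw [curv4_smulm hc])
    have h0 : CS ginv (fun i j k l => curv4 g nabla lb (e k) (J (e l)) (J (e i)) (e j))
        = CS ginv (fun i j k l => curv4 g nabla lb (J (e k)) (e l) (J (e i)) (e j)) := s.symm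
    have h1 : CS ginv (fun i j k l => curv4 g nabla lb (J (e k)) (e l) (J (e i)) (e j))
        = CS ginv (fun i j k l => curv4 g nabla lb (J (e l)) (e k) (J (e i)) (e j)) :=
      CS_swap34 hgs (fun i j k l => curv4 g nabla lb (J (e k)) (e l) (J (e i)) (e j))
    have h2 : CS ginv (fun i j k l => curv4 g nabla lb (J (e l)) (e k) (J (e i)) (e j))
        = -(CS ginv (fun i j k l => curv4 g nabla lb (e k) (J (e l)) (J (e i)) (e j))) := by
      rw [← CS_neg]
      exact CS_congr (fun i j k l => curv4_anti12 hc (J (e l)) (e k) (J (e i)) (e j))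
    apply half
    calc CS ginv (fun i j k l => curv4 g nabla lb (e k) (J (e l)) (J (e i)) (e j)) + CS ginv (fun i j k l => curv4 g nabla lb (e k) (J (e l)) (J (e i)) (e j))
        = CS ginv (fun i j k l => curv4 g nabla lb (J (e l)) (e k) (J (e i)) (e j))
          + CS ginv (fun i j k l => curv4 g nabla lb (e k) (J (e l)) (J (e i)) (e j)) := by rw [← h1, ← h0]
      _ = 0 := by rw [h2]; ring
  have hd2 : CS ginv (fun i j k l => curv4 g nabla lb (e k) (J (e l)) (e i) (J (e j))) = 0 := by
    have s := CS_slide2 (e := e) (ginv := ginv) hc hsp hginv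
      (fun i j x y => curv4 g nabla lb x y (e i) (J (e j)))
      (fun i j x x' y => by (try dsimp only); rw [curv4_addl hc])
      (fun i j a x y => by (try dsimp only); rw [curv4_smull hc])
      (fun i j x y y' => by (try dsimp only); rw [curv4_addm hc])
      (fun i j a x y => by (try dsimp only); rw [curv4_smulm hc])
    have h0 : CS ginv (fun i j k l => curv4 g nabla lb (e k) (J (e l)) (e i) (J (e j)))
        = CS ginv (fun i j k l => curv4 g nabla lb (J (e k)) (e l) (e i) (J (e j))) := s.symm
    have h1 : CS ginv (fun i j k l => curv4 g nabla lb (J (e k)) (e l) (e i) (J (e j)))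
        = CS ginv (fun i j k l => curv4 g nabla lb (J (e l)) (e k) (e i) (J (e j))) :=
      CS_swap34 hgs (fun i j k l => curv4 g nabla lb (J (e k)) (e l) (e i) (J (e j)))
    have h2 : CS ginv (fun i j k l => curv4 g nabla lb (J (e l)) (e k) (e i) (J (e j)))
        = -(CS ginv (fun i j k l => curv4 g nabla lb (e k) (J (e l)) (e i) (J (e j)))) := by
      rw [← CS_neg]
      exact CS_congr (fun i j k l => curv4_anti12 hc (J (e l)) (e k) (e i) (J (e j)))
    apply half
    calc CS ginv (fun i j k l => curv4 g nabla lb (e k) (J (e l)) (e i) (J (e j))) + CS ginv (fun i j k l => curv4 g nabla lb (e k) (J (e l)) (e i) (J (e j)))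
        = CS ginv (fun i j k l => curv4 g nabla lb (J (e l)) (e k) (e i) (J (e j)))
          + CS ginv (fun i j k l => curv4 g nabla lb (e k) (J (e l)) (e i) (J (e j))) := by rw [← h1, ← h0]
      _ = 0 := by rw [h2]; ring
  have hh : CS ginv (fun i j k l => covF g nabla J act (e k) (J (e l)) (e i) (e j)) = CS ginv (fun i j k l => covF g nabla J act (J (e l)) (e k) (e i) (e j)) := by
    have h0 : CS ginv (fun i j k l =>
          covF g nabla J act (e k) (J (e l)) (e i) (e j) - covF g nabla J act (J (e l)) (e k) (e i) (e j))
        = CS ginv (fun i j k l =>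
          curv4 g nabla lb (e k) (J (e l)) (J (e i)) (e j) - curv4 g nabla lb (e k) (J (e l)) (e i) (J (e j))) :=
      CS_congr (fun i j k l => star hc (e k) (J (e l)) (e i) (e j))
    rw [CS_sub, CS_sub, hd1, hd2] at h0
    linear_combination h0
  -- (i) cyclic around Q13
  have hi : CS ginv (fun i j k l => covF g nabla J act (J (e l)) (e k) (e i) (e j)) + CS ginv (fun i j k l => covF g nabla J act (J (e l)) (e i) (e j) (e k)) + CS ginv (fun i j k l => covF g nabla J act (J (e l)) (e i) (e j) (e k)) = 0 := by
    have h0 : CS ginv (fun i j k l => covF g nabla J act (J (e l)) (e k) (e i) (e j)) + CS ginv (fun i j k l => covF g nabla J act (J (e l)) (e i) (e j) (e k)) + CS ginv (fun i j k l => covF g nabla J act (J (e l)) (e j) (e k) (e i)) = 0 := by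
      rw [← CS_add, ← CS_add]
      rw [CS_congr (h := fun _ _ _ _ => (0:A))
        (fun i j k l => cyc hc W3 (J (e l)) (e k) (e i) (e j)), CS_zero]
    have h1 : CS ginv (fun i j k l => covF g nabla J act (J (e l)) (e j) (e k) (e i)) = CS ginv (fun i j k l => covF g nabla J act (J (e l)) (e i) (e j) (e k)) := by
      have s1 : CS ginv (fun i j k l => covF g nabla J act (J (e l)) (e j) (e k) (e i))
          = CS ginv (fun i j k l => covF g nabla J act (J (e l)) (e j) (e i) (e k)) :=
        CS_congr (fun i j k l => covF_sym34 hc (J (e l)) (e j) (e k) (e i))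
      rw [s1, CS_swap12 hgs (fun i j k l => covF g nabla J act (J (e l)) (e j) (e i) (e k))]
    rw [h1] at h0
    exact h0
  -- (j) star between Q14 and Q9
  have he1 : CS ginv (fun i j k l => curv4 g nabla lb (J (e l)) (e i) (J (e j)) (e k)) = CS ginv (fun i j k l => curv4 g nabla lb (e i) (e k) (J (e l)) (J (e j))) := by
    have s := CS_slide2 (e := e) (ginv := ginv) hc hsp hginv
      (fun i j x y => curv4 g nabla lb y (e i) (J (e j)) x)
      (fun i j x x' y => by (try dsimp only); rw [curv4_add4 hc])
      (fun i j a x y => by (try dsimp only); rw [curv4_smul4 hc])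
      (fun i j x y y' => by (try dsimp only); rw [curv4_addl hc])
      (fun i j a x y => by (try dsimp only); rw [curv4_smull hc])
    have h0 : CS ginv (fun i j k l => curv4 g nabla lb (J (e l)) (e i) (J (e j)) (e k))
        = CS ginv (fun i j k l => curv4 g nabla lb (e l) (e i) (J (e j)) (J (e k))) := by
      rw [← s]
    rw [h0]
    exact CS_renameE1 hgs (fun a b c d => curv4 g nabla lb (e a) (e b) (J (e c)) (J (e d)))
  have he2 : CS ginv (fun i j k l => curv4 g nabla lb (J (e l)) (e i) (e j) (J (e k))) = -(CS ginv (fun i j k l => curv4 g nabla lb (e i) (e k) (e l) (e j))) := by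
    have s := CS_slide2 (e := e) (ginv := ginv) hc hsp hginv
      (fun i j x y => curv4 g nabla lb y (e i) (e j) (J x))
      (fun i j x x' y => by (try dsimp only); rw [hc.J_add, curv4_add4 hc])
      (fun i j a x y => by (try dsimp only); rw [hc.J_smul, curv4_smul4 hc])
      (fun i j x y y' => by (try dsimp only); rw [curv4_addl hc])
      (fun i j a x y => by (try dsimp only); rw [curv4_smull hc])
    have h0 : CS ginv (fun i j k l => curv4 g nabla lb (J (e l)) (e i) (e j) (J (e k)))
        = CS ginv (fun i j k l => curv4 g nabla lb (e l) (e i) (e j) (J (J (e k)))) := by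
      rw [← s]
    have h1 : CS ginv (fun i j k l => curv4 g nabla lb (e l) (e i) (e j) (J (J (e k))))
        = -(CS ginv (fun i j k l => curv4 g nabla lb (e l) (e i) (e j) (e k))) := by
      rw [← CS_neg]
      refine CS_congr (fun i j k l => ?_)
      rw [hc.J_sq, curv4_neg4 hc]
    have h2 : CS ginv (fun i j k l => curv4 g nabla lb (e l) (e i) (e j) (e k)) = CS ginv (fun i j k l => curv4 g nabla lb (e i) (e k) (e l) (e j)) :=
      CS_renameE1 hgs (fun a b c d => curv4 g nabla lb (e a) (e b) (e c) (e d))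
    rw [h0, h1, h2]
  have hj : CS ginv (fun i j k l => covF g nabla J act (J (e l)) (e i) (e j) (e k)) - CS ginv (fun i j k l => covF g nabla J act (e i) (e k) (J (e l)) (e j)) = (CS ginv (fun i j k l => curv4 g nabla lb (e i) (e k) (J (e l)) (J (e j)))) + (CS ginv (fun i j k l => curv4 g nabla lb (e i) (e k) (e l) (e j))) := by
    have h0 : CS ginv (fun i j k l =>
          covF g nabla J act (J (e l)) (e i) (e j) (e k) - covF g nabla J act (e i) (J (e l)) (e j) (e k))
        = CS ginv (fun i j k l =>
          curv4 g nabla lb (J (e l)) (e i) (J (e j)) (e k) - curv4 g nabla lb (J (e l)) (e i) (e j) (J (e k))) :=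
      CS_congr (fun i j k l => star hc (J (e l)) (e i) (e j) (e k))
    rw [CS_sub, CS_sub, he1, he2, hQ9a] at h0
    linear_combination h0
  -- (k) the quadratic W3 relation
  have hk : CS ginv (fun i j k l => g (covJ nabla J (e i) (e k)) (covJ nabla J (e j) (e l))) + CS ginv (fun i j k l => g (covJ nabla J (e i) (e l)) (covJ nabla J (e k) (e j))) + CS ginv (fun i j k l => g (covJ nabla J (e i) (e l)) (covJ nabla J (e k) (e j))) = 0 := sigma_rel hc hsp hginv W3
  -- (l) vanishing of the trace part
  have hl : CS ginv (fun i j k l => g (covJ nabla J (e k) (e l)) (covJ nabla J (e i) (e j))) = 0 := by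
    unfold CS
    apply Finset.sum_eq_zero
    intro i _
    apply Finset.sum_eq_zero
    intro j _
    have hw := omega_zero (e := e) (ginv := ginv) hc hsp hginv W3 (covJ nabla J (e i) (e j))
    calc (∑ k, ∑ l, ginv i j * ginv k l
          * g (covJ nabla J (e k) (e l)) (covJ nabla J (e i) (e j)))
        = ginv i j * ∑ k, ∑ l, ginv k l
            * g (covJ nabla J (e k) (e l)) (covJ nabla J (e i) (e j)) := by
          rw [Finset.mul_sum]
          refine Finset.sum_congr rfl fun k _ => ?_
          rw [Finset.mul_sum]
          exact Finset.sum_congr rfl fun l _ => by ring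
      _ = 0 := by rw [hw, mul_zero]
  -- final assembly
  have hbig : (CS ginv (fun i j k l => g (covJ nabla J (e i) (e k)) (covJ nabla J (e j) (e l))) + 2*((CS ginv (fun i j k l => curv4 g nabla lb (e i) (e k) (e l) (e j))) + (CS ginv (fun i j k l => curv4 g nabla lb (e i) (e k) (J (e l)) (J (e j))))))
      + (CS ginv (fun i j k l => g (covJ nabla J (e i) (e k)) (covJ nabla J (e j) (e l))) + 2*((CS ginv (fun i j k l => curv4 g nabla lb (e i) (e k) (e l) (e j))) + (CS ginv (fun i j k l => curv4 g nabla lb (e i) (e k) (J (e l)) (J (e j)))))) = 0 := by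
    linear_combination 2*hcc - 2*hd + 2*he - 2*hf - 2*hk - 4*hl + 2*hh + 2*hi - 4*hj
      - 2*ha + hb + hg'
  have hfin := half hbig
  linear_combination hfin

end Main

end Basis
end NW


/-- On a W₃-manifold, `‖∇J‖² = -2(τ + τ**)`, where `τ = gⁱʲgᵏˡ R(eᵢ,eₖ,eₗ,eⱼ)` is the scalar curvature and `τ** = gⁱʲgᵏˡ R(eᵢ,eₖ,Jeₗ,Jeⱼ)`. -/
theorem norm_nablaJ_eq_neg_two_tau_add_tauss
    (g : V → V → A) (J : V → V) (nabla : V → V → V)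
    (act : V → A → A) (lb : V → V → V)
    (g_symm : ∀ x y, g x y = g y x)
    (g_addl : ∀ x y z, g (x + y) z = g x z + g y z)
    (g_smull : ∀ (a : A) (x y : V), g (a • x) y = a * g x y)
    (J_add : ∀ x y, J (x + y) = J x + J y)
    (J_smul : ∀ (a : A) (x : V), J (a • x) = a • J x)
    (J_sq : ∀ x, J (J x) = -x)
    (norden : ∀ x y, g (J x) (J y) = -(g x y))
    (act_add : ∀ X (a b : A), act X (a + b) = act X a + act X b)
    (act_mul : ∀ X (a b : A), act X (a * b) = act X a * b + a * act X b)
    (nabla_addl : ∀ X Y Z, nabla (X + Y) Z = nabla X Z + nabla Y Z)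
    (nabla_smull : ∀ (a : A) (X Y : V), nabla (a • X) Y = a • nabla X Y)
    (nabla_addr : ∀ X Y Z, nabla X (Y + Z) = nabla X Y + nabla X Z)
    (nabla_leib : ∀ X (a : A) (Y : V), nabla X (a • Y) = act X a • Y + a • nabla X Y)
    (compat : ∀ X Y Z, act X (g Y Z) = g (nabla X Y) Z + g Y (nabla X Z))
    (torsion_free : ∀ X Y, nabla X Y - nabla Y X = lb X Y)
    (act_lb : ∀ X Y (a : A), act (lb X Y) a = act X (act Y a) - act Y (act X a))
    {m : ℕ} (e : Fin m → V) (ginv : Fin m → Fin m → A)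
    (hspan : ∀ v : V, ∃ c : Fin m → A, v = ∑ i, c i • e i)
    (hginv : ∀ i j, (∑ k, ginv i k * g (e k) (e j)) = if i = j then (1:A) else 0)
    (W3 : ∀ X Y Z, Ften g nabla J X Y Z + Ften g nabla J Y Z X + Ften g nabla J Z X Y = 0) :
    (∑ i, ∑ j, ∑ k, ∑ l, ginv i j * ginv k l *
        g (covJ nabla J (e i) (e k)) (covJ nabla J (e j) (e l))) =
      -2 * ((∑ i, ∑ j, ∑ k, ∑ l, ginv i j * ginv k l * curv4 g nabla lb (e i) (e k) (e l) (e j))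
        + (∑ i, ∑ j, ∑ k, ∑ l, ginv i j * ginv k l * curv4 g nabla lb (e i) (e k) (J (e l)) (J (e j)))) := by
  exact NW.main_identity
    ⟨g_symm, g_addl, g_smull, J_add, J_smul, J_sq, norden, act_add, act_mul,
      nabla_addl, nabla_smull, nabla_addr, nabla_leib, compat, torsion_free, act_lb⟩
    hspan hginv W3
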